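/- For integers k ≥ 3 and n ≥ 1, define L_k(n) = k·n − max( 2^{ν₂(n+1)} − 1 , max{ k·(n mod 2^t) − (k−1)·(2^t − 1) : t ≥ 2 and ⌊n/2^{t−2}⌋ ≡ 3 (mod 4) } ), where the inner maximum is over all integers t ≥ 2 such that the bits of n in positions t−1 and t−2 are both 1 (and this inner maximum is omitted, i.e. L_k(n) = k·n − (2^{ν₂(n+1)} − 1), if no such t exists). Then for all integers k ≥ 3 and e ≥ 2 and all n with ⌊(k−1)·2^e/k⌋ ≤ n ≤ 2^e − 1, one has L_k(n) = (k−1)·(2^e − 1). -/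

import Mathlib

/-- `zclBound k n = k·n − max(2^{ν₂(n+1)} − 1, max_t (k·(n mod 2^t) − (k−1)(2^t−1)))`,
where the inner maximum is over all `t ≥ 2` such that `⌊n/2^{t−2}⌋ ≡ 3 (mod 4)`
(i.e. bits `t−1` and `t−2` of `n` are both 1); any such `t` satisfies
`t − 2 < 2^{t−2} ≤ n`, hence `t < n + 3`, so the range `Finset.range (n+3)` captures
all of them.  If no such `t` exists, only the term `2^{ν₂(n+1)} − 1` remains. -/
def zclBound (k n : ℕ) : ℤ :=
  (k : ℤ) * n -
    (insert ((2 : ℤ) ^ padicValNat 2 (n + 1) - 1)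
      (((Finset.range (n + 3)).filter
          (fun t => 2 ≤ t ∧ n / 2 ^ (t - 2) % 4 = 3)).image
        (fun t => (k : ℤ) * (n % 2 ^ t) - ((k : ℤ) - 1) * (2 ^ t - 1)))).max'
      (Finset.insert_nonempty _ _)

/-- The finset whose max is subtracted in `zclBound`. -/
def bSet (k n : ℕ) : Finset ℤ :=
  insert ((2 : ℤ) ^ padicValNat 2 (n + 1) - 1)
    (((Finset.range (n + 3)).filter
        (fun t => 2 ≤ t ∧ n / 2 ^ (t - 2) % 4 = 3)).image
      (fun t => (k : ℤ) * (n % 2 ^ t) - ((k : ℤ) - 1) * (2 ^ t - 1)))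

lemma zclBound_eq (k n : ℕ) :
    zclBound k n = (k : ℤ) * n - (bSet k n).max' (Finset.insert_nonempty _ _) := rfl

/-- Characterization of the 2-adic valuation by divisibility. -/
lemma padic_eq {v x : ℕ} (hx : 0 < x) (h1 : 2 ^ v ∣ x) (h2 : ¬ 2 ^ (v + 1) ∣ x) :
    padicValNat 2 x = v := by
  haveI : Fact (Nat.Prime 2) := ⟨Nat.prime_two⟩
  refine le_antisymm ?_ ((padicValNat_dvd_iff_le hx.ne').mp h1)
  by_contra h
  exact h2 ((padicValNat_dvd_iff_le hx.ne').mpr (by omega))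

/-- Casting `Nat.mod` to `Int.emod`. -/
lemma cast_mod (n t : ℕ) : ((n % 2 ^ t : ℕ) : ℤ) = (n : ℤ) % 2 ^ t := by
  push_cast
  ring

/-- Upper bound for the valuation term. -/
lemma ub_val (k e n : ℕ) (hk : 3 ≤ k) (key : (k - 1) * 2 ^ e < (n + 1) * k)
    (hlt : n < 2 ^ e) :
    (2 : ℤ) ^ padicValNat 2 (n + 1) - 1 ≤
      (k : ℤ) * n - ((k : ℤ) - 1) * ((2 : ℤ) ^ e - 1) := by
  haveI : Fact (Nat.Prime 2) := ⟨Nat.prime_two⟩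
  have hk1 : 1 ≤ k := by omega
  zify [hk1] at key
  have hdvd : 2 ^ padicValNat 2 (n + 1) ∣ n + 1 := pow_padicValNat_dvd
  have hle : 2 ^ padicValNat 2 (n + 1) ≤ n + 1 := Nat.le_of_dvd (by omega) hdvd
  rcases eq_or_lt_of_le (Nat.succ_le_of_lt hlt) with heq | hlt'
  · -- n + 1 = 2 ^ e
    have heq' : n + 1 = 2 ^ e := heq
    have hve : padicValNat 2 (n + 1) = e := by
      rw [heq']; exact padicValNat.prime_pow e
    have hnZ : (n : ℤ) + 1 = 2 ^ e := by exact_mod_cast heq'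
    rw [hve]
    have hid : (k : ℤ) * ((2:ℤ)^e - 1) - ((k : ℤ) - 1) * ((2:ℤ)^e - 1) = (2:ℤ)^e - 1 := by
      ring
    have hn' : (n : ℤ) = 2 ^ e - 1 := by linarith
    rw [hn']
    linarith
  · -- n + 1 < 2 ^ e
    have hvlt : padicValNat 2 (n + 1) < e := by
      have h2 : 2 ^ padicValNat 2 (n + 1) < 2 ^ e := lt_of_le_of_lt hle hlt'
      exact (Nat.pow_lt_pow_iff_right (by norm_num)).mp h2
    set v := padicValNat 2 (n + 1) with hv
    set d := 2 ^ e - (n + 1) with hd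
    have hdn : n + 1 + d = 2 ^ e := by
      have : n + 1 ≤ 2 ^ e := hlt'.le
      omega
    have hdd : 2 ^ v ∣ d := Nat.dvd_sub (pow_dvd_pow 2 hvlt.le) hdvd
    have hnZ : (n : ℤ) + 1 + (d : ℤ) = 2 ^ e := by exact_mod_cast hdn
    have hn' : (n : ℤ) = 2 ^ e - 1 - (d : ℤ) := by linarith
    rw [hn'] at key ⊢
    have hkdZ : (k : ℤ) * d < 2 ^ e := by nlinarith [key]
    have hddZ : (2 : ℤ) ^ v ∣ (d : ℤ) := by
      have := Int.natCast_dvd_natCast.mpr hdd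
      push_cast at this
      exact this
    have hvd : (2 : ℤ) ^ v ∣ 2 ^ e - (k : ℤ) * d :=
      dvd_sub (pow_dvd_pow 2 hvlt.le) (hddZ.mul_left k)
    have hrpos : 0 < 2 ^ e - (k : ℤ) * d := by linarith
    have hr : (2 : ℤ) ^ v ≤ 2 ^ e - (k : ℤ) * d := Int.le_of_dvd hrpos hvd
    nlinarith [hr]

/-- Upper bound for all the `t`-terms (no eligibility needed). -/
lemma ub_image (k e n t : ℕ) (hk : 3 ≤ k) (key : (k - 1) * 2 ^ e < (n + 1) * k)
    (hlt : n < 2 ^ e) :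
    (k : ℤ) * ((n : ℤ) % 2 ^ t) - ((k : ℤ) - 1) * ((2 : ℤ) ^ t - 1) ≤
      (k : ℤ) * n - ((k : ℤ) - 1) * ((2 : ℤ) ^ e - 1) := by
  rw [← cast_mod]
  have hkZ : (3 : ℤ) ≤ (k : ℤ) := by exact_mod_cast hk
  have hk1 : 1 ≤ k := by omega
  rcases le_or_gt e t with hte | hte
  · rw [Nat.mod_eq_of_lt (lt_of_lt_of_le hlt (Nat.pow_le_pow_right (by norm_num) hte))]
    have h2 : (2 : ℤ) ^ e ≤ 2 ^ t := pow_le_pow_right₀ (by norm_num) hte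
    nlinarith
  · -- t < e
    set A := n / 2 ^ t with hA
    set b := n % 2 ^ t with hb
    have hnb : n = 2 ^ t * A + b := (Nat.div_add_mod n (2 ^ t)).symm
    have hblt : b < 2 ^ t := Nat.mod_lt _ (pow_pos (by norm_num) t)
    have hsplit : 2 ^ e = 2 ^ (e - t) * 2 ^ t := by
      rw [← pow_add]; congr 1; omega
    -- (k-1) * 2^(e-t) < k * (A+1)
    have hstep : (k - 1) * 2 ^ (e - t) < k * (A + 1) := by
      have h1 : ((k - 1) * 2 ^ (e - t)) * 2 ^ t < (k * (A + 1)) * 2 ^ t := by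
        calc ((k - 1) * 2 ^ (e - t)) * 2 ^ t = (k - 1) * 2 ^ e := by
              rw [hsplit]; ring
          _ < (n + 1) * k := key
          _ ≤ ((A + 1) * 2 ^ t) * k := by
              have hle : n + 1 ≤ (A + 1) * 2 ^ t := by
                calc n + 1 = 2 ^ t * A + b + 1 := by rw [← hnb]
                  _ ≤ 2 ^ t * A + 2 ^ t := by omega
                  _ = (A + 1) * 2 ^ t := by ring
              exact Nat.mul_le_mul_right k hle
          _ = (k * (A + 1)) * 2 ^ t := by ring
      exact lt_of_mul_lt_mul_right h1 (Nat.zero_le _)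
    zify [hk1] at hstep
    have hstepZ : ((k : ℤ) - 1) * 2 ^ (e - t) + 1 ≤ (k : ℤ) * ((A : ℤ) + 1) :=
      Int.lt_iff_add_one_le.mp (by linarith)
    have hnbZ : (n : ℤ) = 2 ^ t * (A : ℤ) + (b : ℤ) := by exact_mod_cast hnb
    have hsplitZ : (2 : ℤ) ^ e = 2 ^ (e - t) * 2 ^ t := by
      rw [← pow_add]; congr 1; omega
    have h2tpos : (0 : ℤ) < 2 ^ t := by positivity
    have hmain : 0 ≤ (2 : ℤ) ^ t *
        ((k : ℤ) * (A : ℤ) - ((k : ℤ) - 1) * 2 ^ (e - t) + ((k : ℤ) - 1)) := by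
      apply mul_nonneg h2tpos.le
      linarith
    rw [hnbZ, hsplitZ]
    nlinarith [hmain]

/-- Membership: the target value lies in the finset. -/
lemma target_mem (e : ℕ) : ∀ k n : ℕ, 3 ≤ k → 2 ≤ e →
    (k - 1) * 2 ^ e < (n + 1) * k → n < 2 ^ e →
    (k : ℤ) * n - ((k : ℤ) - 1) * ((2 : ℤ) ^ e - 1) ∈ bSet k n := by
  induction e using Nat.strong_induction_on with
  | _ e ih =>
    intro k n hk he key hlt
    haveI : Fact (Nat.Prime 2) := ⟨Nat.prime_two⟩
    rcases le_or_gt (3 * 2 ^ (e - 2)) n with hbig | hsmall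
    · -- Case A : bits e-1 and e-2 of n are set, take t = e
      have hsplit : (2:ℕ) ^ e = 4 * 2 ^ (e - 2) := by
        have h : e - 2 + 2 = e := by omega
        calc (2:ℕ) ^ e = 2 ^ (e - 2 + 2) := by rw [h]
          _ = 4 * 2 ^ (e - 2) := by ring
      have hq : n / 2 ^ (e - 2) = 3 := Nat.div_eq_of_lt_le hbig (by omega)
      have hrange : e ∈ Finset.range (n + 3) := by
        have h1 : e - 2 < 2 ^ (e - 2) := Nat.lt_two_pow_self
        have h2 : 2 ^ (e - 2) ≤ n := by omega
        simp only [Finset.mem_range]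
        omega
      apply Finset.mem_insert_of_mem
      rw [Finset.mem_image]
      refine ⟨e, ?_, ?_⟩
      · rw [Finset.mem_filter]
        exact ⟨hrange, he, by rw [hq]⟩
      · rw [← cast_mod, Nat.mod_eq_of_lt hlt]
    · -- Case B : k must be 3, n = 2^(e-1) + m with m < 2^(e-2)
      have hsplit : (2:ℕ) ^ e = 4 * 2 ^ (e - 2) := by
        have h : e - 2 + 2 = e := by omega
        calc (2:ℕ) ^ e = 2 ^ (e - 2 + 2) := by rw [h]
          _ = 4 * 2 ^ (e - 2) := by ring
      have hk3 : k = 3 := by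
        have h1 : n + 1 ≤ 3 * 2 ^ (e - 2) := hsmall
        have h2 : (k - 1) * (4 * 2 ^ (e - 2)) < (3 * 2 ^ (e - 2)) * k :=
          lt_of_lt_of_le (hsplit ▸ key) (Nat.mul_le_mul_right k h1)
        have h2pos : 0 < 2 ^ (e - 2) := pow_pos (by norm_num) _
        by_contra hcon
        have hk4 : 4 ≤ k := by omega
        have hZ : ((k:ℤ) - 1) * (4 * (2 ^ (e - 2) : ℕ)) < 3 * ((2 ^ (e - 2) : ℕ)) * k := by
          zify [show 1 ≤ k by omega] at h2
          exact_mod_cast h2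
        have hcZ : (1 : ℤ) ≤ ((2 ^ (e - 2) : ℕ) : ℤ) := by exact_mod_cast h2pos
        have hk4Z : (4 : ℤ) ≤ (k : ℤ) := by exact_mod_cast hk4
        nlinarith [mul_nonneg (by linarith : (0:ℤ) ≤ (k:ℤ) - 4) (by linarith : (0:ℤ) ≤ ((2 ^ (e - 2) : ℕ) : ℤ))]
      subst hk3
      have hsplit1 : (2:ℕ) ^ e = 2 * 2 ^ (e - 1) := by
        have h : e - 1 + 1 = e := by omega
        calc (2:ℕ) ^ e = 2 ^ (e - 1 + 1) := by rw [h]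
          _ = 2 * 2 ^ (e - 1) := by ring
      have hn2 : 2 ^ (e - 1) ≤ n := by
        by_contra h
        push_neg at h
        omega
      have hsplit2 : (2:ℕ) ^ (e - 1) = 2 * 2 ^ (e - 2) := by
        have h : e - 2 + 1 = e - 1 := by omega
        calc (2:ℕ) ^ (e - 1) = 2 ^ (e - 2 + 1) := by rw [h]
          _ = 2 * 2 ^ (e - 2) := by ring
      set m := n - 2 ^ (e - 1) with hm
      have hnm : n = 2 ^ (e - 1) + m := by omega
      have hmlt : m < 2 ^ (e - 2) := by omega
      -- target for (e, n) equals target for (e-2, m)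
      have htarget : ((3:ℕ) : ℤ) * n - (((3:ℕ) : ℤ) - 1) * ((2 : ℤ) ^ e - 1) =
          ((3:ℕ) : ℤ) * m - (((3:ℕ) : ℤ) - 1) * ((2 : ℤ) ^ (e - 2) - 1) := by
        have h1 : (n : ℤ) = 2 ^ (e - 1) + (m : ℤ) := by exact_mod_cast hnm
        have h2 : (2 : ℤ) ^ e = 4 * 2 ^ (e - 2) := by exact_mod_cast hsplit
        have h3 : (2 : ℤ) ^ (e - 1) = 2 * 2 ^ (e - 2) := by exact_mod_cast hsplit2
        rw [h1, h2, h3]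
        push_cast
        ring
      rw [htarget]
      rcases lt_or_ge e 4 with he4 | he4
      · -- base cases e = 2 and e = 3
        interval_cases e
        · -- e = 2 : n = 2, m = 0
          have hn : n = 2 := by norm_num at hlt hsmall hn2; omega
          have hm0 : m = 0 := by norm_num at hnm ⊢; omega
          have hval : padicValNat 2 (n + 1) = 0 := by
            rw [hn]
            exact padicValNat.eq_zero_of_not_dvd (by norm_num)
          rw [hm0]
          have hid : ((3:ℕ) : ℤ) * ((0:ℕ) : ℤ) - (((3:ℕ) : ℤ) - 1) * ((2 : ℤ) ^ (2 - 2) - 1) =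
              (2 : ℤ) ^ padicValNat 2 (n + 1) - 1 := by
            rw [hval]; norm_num
          rw [hid]
          exact Finset.mem_insert_self _ _
        · -- e = 3 : n = 5, m = 1
          have hn : n = 5 := by norm_num at hlt hsmall hn2 key; omega
          have hm1 : m = 1 := by norm_num at hnm; omega
          have hval : padicValNat 2 (n + 1) = 1 := by
            rw [hn]
            exact padic_eq (by norm_num) (by norm_num) (by decide)
          rw [hm1]
          have hid : ((3:ℕ) : ℤ) * ((1:ℕ) : ℤ) - (((3:ℕ) : ℤ) - 1) * ((2 : ℤ) ^ (3 - 2) - 1) =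
              (2 : ℤ) ^ padicValNat 2 (n + 1) - 1 := by
            rw [hval]; norm_num
          rw [hid]
          exact Finset.mem_insert_self _ _
      · -- e ≥ 4 : recurse with (e - 2, m)
        have hkey' : (3 - 1) * 2 ^ (e - 2) < (m + 1) * 3 := by omega
        have hrec := ih (e - 2) (by omega) 3 m (le_refl 3) (by omega) hkey' hmlt
        rcases Finset.mem_insert.mp hrec with hval | himg
        · -- valuation term
          set v := padicValNat 2 (m + 1) with hv
          have hm1pos : 0 < m + 1 := by omega
          have hdvd : 2 ^ v ∣ m + 1 := pow_padicValNat_dvd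
          have hnot : ¬ 2 ^ (v + 1) ∣ m + 1 := pow_succ_padicValNat_not_dvd (by omega)
          have hvle : v ≤ e - 2 := by
            have h1 : 2 ^ v ≤ m + 1 := Nat.le_of_dvd hm1pos hdvd
            have h2 : 2 ^ v ≤ 2 ^ (e - 2) := by omega
            exact (Nat.pow_le_pow_iff_right (by norm_num)).mp h2
          have hvdvd1 : 2 ^ v ∣ 2 ^ (e - 1) := pow_dvd_pow 2 (by omega)
          have hvdvd2 : 2 ^ (v + 1) ∣ 2 ^ (e - 1) := pow_dvd_pow 2 (by omega)
          have hval' : padicValNat 2 (n + 1) = v := by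
            apply padic_eq (by omega)
            · rw [hnm, add_assoc]
              exact Nat.dvd_add hvdvd1 hdvd
            · rw [hnm, add_assoc]
              intro hcon
              exact hnot ((Nat.dvd_add_right hvdvd2).mp hcon)
          rw [hval, ← hval']
          exact Finset.mem_insert_self _ _
        · -- image term
          rw [Finset.mem_image] at himg
          obtain ⟨t, htmem, htval⟩ := himg
          rw [Finset.mem_filter, Finset.mem_range] at htmem
          obtain ⟨htrange, ht2, htmod⟩ := htmem
          have hq3 : 3 ≤ m / 2 ^ (t - 2) := htmod ▸ Nat.mod_le _ 4
          have h3le : 3 * 2 ^ (t - 2) ≤ m :=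
            calc 3 * 2 ^ (t - 2) ≤ (m / 2 ^ (t - 2)) * 2 ^ (t - 2) :=
                Nat.mul_le_mul_right _ hq3
              _ ≤ m := Nat.div_mul_le_self m _
          have htlt : t - 2 < e - 2 := by
            have h1 : 2 ^ (t - 2) < 2 ^ (e - 2) := by omega
            exact (Nat.pow_lt_pow_iff_right (by norm_num)).mp h1
          have hte : t ≤ e - 1 := by omega
          have hpow1 : 2 ^ (e - 1) = 2 ^ t * 2 ^ (e - 1 - t) := by
            rw [← pow_add]; congr 1; omega
          have hmod_eq : n % 2 ^ t = m % 2 ^ t := by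
            rw [hnm, hpow1, Nat.mul_add_mod]
          have hpow2 : 2 ^ (e - 1) = 2 ^ (t - 2) * (4 * 2 ^ (e - 1 - t)) := by
            rw [show (4:ℕ) = 2 ^ 2 by norm_num, ← pow_add, ← pow_add]
            congr 1; omega
          have hdiv_eq : n / 2 ^ (t - 2) % 4 = 3 := by
            rw [hnm, hpow2, Nat.mul_add_div (pow_pos (by norm_num) _),
              Nat.add_comm, Nat.add_mul_mod_self_left]
            exact htmod
          apply Finset.mem_insert_of_mem
          rw [Finset.mem_image]
          refine ⟨t, ?_, ?_⟩
          · rw [Finset.mem_filter, Finset.mem_range]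
            exact ⟨by omega, ht2, hdiv_eq⟩
          · have hmodZ : (n : ℤ) % 2 ^ t = (m : ℤ) % 2 ^ t := by
              rw [← cast_mod, ← cast_mod, hmod_eq]
            rw [hmodZ]
            exact htval

/-- Theorem 4.1: for `k ≥ 3` and `e ≥ 2`, the cohomological lower bound
`zcl_k(P^n)` equals `(k−1)(2^e−1)` for `⌊(k−1)·2^e/k⌋ ≤ n ≤ 2^e − 1`. -/
theorem stmt13 (k e n : ℕ) (hk : 3 ≤ k) (he : 2 ≤ e)
    (hn1 : (k - 1) * 2 ^ e / k ≤ n) (hn2 : n ≤ 2 ^ e - 1) :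
    zclBound k n = ((k : ℤ) - 1) * (2 ^ e - 1) := by
  have hk0 : 0 < k := by omega
  have h2e : 0 < 2 ^ e := pow_pos (by norm_num) e
  have hlt : n < 2 ^ e := by omega
  have key : (k - 1) * 2 ^ e < (n + 1) * k :=
    (Nat.div_lt_iff_lt_mul hk0).mp (Nat.lt_succ_of_le hn1)
  have hub : ∀ y ∈ bSet k n, y ≤ (k : ℤ) * n - ((k : ℤ) - 1) * ((2 : ℤ) ^ e - 1) := by
    intro y hy
    rcases Finset.mem_insert.mp hy with h | h
    · rw [h]; exact ub_val k e n hk key hlt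
    · rw [Finset.mem_image] at h
      obtain ⟨t, _, ht⟩ := h
      rw [← ht]
      exact ub_image k e n t hk key hlt
  have hmem := target_mem e k n hk he key hlt
  have hmax : (bSet k n).max' (Finset.insert_nonempty _ _) =
      (k : ℤ) * n - ((k : ℤ) - 1) * ((2 : ℤ) ^ e - 1) :=
    le_antisymm (Finset.max'_le _ _ _ hub) (Finset.le_max' _ _ hmem)
  rw [zclBound_eq, hmax]
  ring
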